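/- In the 4-node Kripke model consisting of two disjoint chains a < b and c < d with b forcing only p and d forcing only q, every formula θ built from p, q, ⊤ using only ¬ and → satisfies: if both b and d force θ, then a forces θ or c forces θ. Consequently b and d force p ∨ q but no node among a, c does, so p ∨ q is not equivalent to any {¬, →, ⊤}-formula in Gödel–Dummett logic. -/
import Mathlib


inductive Fm (α : Type) : Type where
  | top  : Fm α
  | atom : α → Fm α
  | neg  : Fm α → Fm α
  | and  : Fm α → Fm α → Fm α
  | or   : Fm α → Fm α → Fm α
  | imp  : Fm α → Fm α → Fm α

structure KripkeModel (α : Type) : Type 1 where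
  K : Type
  le : K → K → Prop
  refl : ∀ k, le k k
  trans : ∀ {a b c}, le a b → le b c → le a c
  antisymm : ∀ {a b}, le a b → le b a → a = b
  val : K → α → Prop
  persist : ∀ {k k' p}, le k k' → val k p → val k' p

def force {α : Type} (M : KripkeModel α) : M.K → Fm α → Prop
  | _, .top => True
  | k, .atom p => M.val k p
  | k, .neg φ => ∀ k', M.le k k' → ¬ force M k' φ
  | k, .and φ ψ => force M k φ ∧ force M k ψ
  | k, .or φ ψ => force M k φ ∨ force M k ψ
  | k, .imp φ ψ => ∀ k', M.le k k' → force M k' φ → force M k' ψ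

/-- Formulas built from atoms and ⊤ using only ¬ and →. -/
def OnlyNegImp {α : Type} : Fm α → Prop
  | .top => True
  | .atom _ => True
  | .neg φ => OnlyNegImp φ
  | .and _ _ => False
  | .or _ _ => False
  | .imp φ ψ => OnlyNegImp φ ∧ OnlyNegImp ψ

/-- The 4-node Kripke model consisting of two disjoint chains a = 0 < b = 1 and
c = 2 < d = 3, where b forces only the atom p = 0 and d forces only q = 1. -/
def M16 : KripkeModel (Fin 2) where
  K := Fin 4
  le := fun x y => x = y ∨ (x = 0 ∧ y = 1) ∨ (x = 2 ∧ y = 3)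
  refl := by decide
  trans := by decide
  antisymm := by decide
  val := fun k p => (k = 1 ∧ p = 0) ∨ (k = 3 ∧ p = 1)
  persist := by decide

/-- A Kripke model is connected when any two nodes above a common node are
comparable. -/
def Connected {α : Type} (M : KripkeModel α) : Prop :=
  ∀ k k' k'' : M.K, M.le k k' → M.le k k'' → M.le k' k'' ∨ M.le k'' k'

lemma force_mono {α : Type} (M : KripkeModel α) {k k' : M.K} (h : M.le k k') :
    ∀ φ, force M k φ → force M k' φ := by
  intro φ
  induction φ generalizing k k' with
  | top => intro _; trivial
  | atom p => exact M.persist h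
  | neg φ ih => intro hf k'' hle; exact hf k'' (M.trans h hle)
  | and φ ψ ihφ ihψ => intro hf; exact ⟨ihφ h hf.1, ihψ h hf.2⟩
  | or φ ψ ihφ ihψ =>
    intro hf
    cases hf with
    | inl hf => exact Or.inl (ihφ h hf)
    | inr hf => exact Or.inr (ihψ h hf)
  | imp φ ψ ihφ ihψ => intro hf k'' hle hφ; exact hf k'' (M.trans h hle) hφ

lemma le01 : M16.le (0 : Fin 4) (1 : Fin 4) := Or.inr (Or.inl ⟨rfl, rfl⟩)
lemma le23 : M16.le (2 : Fin 4) (3 : Fin 4) := Or.inr (Or.inr ⟨rfl, rfl⟩)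

lemma main_lemma : ∀ θ : Fm (Fin 2), OnlyNegImp θ →
    force M16 (1 : Fin 4) θ → force M16 (3 : Fin 4) θ →
    force M16 (0 : Fin 4) θ ∨ force M16 (2 : Fin 4) θ := by
  intro θ
  induction θ with
  | top => intro _ _ _; left; trivial
  | atom p =>
    intro _ h1 h3
    exfalso
    rcases h1 with ⟨_, hp0⟩ | ⟨h, _⟩
    · rcases h3 with ⟨h, _⟩ | ⟨_, hp1⟩
      · exact absurd h (by decide)
      · subst hp0; exact absurd hp1 (by decide)
    · exact absurd h (by decide)
  | neg φ ih =>
    intro _ h1 _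
    left
    intro k' hle hf
    rcases hle with h | ⟨_, h⟩ | ⟨h, _⟩
    · exact h1 (1 : Fin 4) (M16.refl (1 : Fin 4)) (force_mono M16 (h ▸ le01) φ hf)
    · subst h; exact h1 (1 : Fin 4) (M16.refl (1 : Fin 4)) hf
    · exact absurd h (by decide)
  | and φ ψ ihφ ihψ => intro h; exact h.elim
  | or φ ψ ihφ ihψ => intro h; exact h.elim
  | imp φ ψ ihφ ihψ =>
    intro hθ h1 h3
    by_cases h0 : force M16 (0 : Fin 4) φ → force M16 (0 : Fin 4) ψ
    · left
      intro k' hle hf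
      rcases hle with h | ⟨_, h⟩ | ⟨h, _⟩
      · exact h ▸ h0 (h ▸ hf)
      · subst h; exact h1 (1 : Fin 4) (M16.refl (1 : Fin 4)) hf
      · exact absurd h (by decide)
    · by_cases h2 : force M16 (2 : Fin 4) φ → force M16 (2 : Fin 4) ψ
      · right
        intro k' hle hf
        rcases hle with h | ⟨h, _⟩ | ⟨_, h⟩
        · exact h ▸ h2 (h ▸ hf)
        · exact absurd h (by decide)
        · subst h; exact h3 (3 : Fin 4) (M16.refl (3 : Fin 4)) hf
      · exfalso
        push_neg at h0 h2
        have f1 : force M16 (1 : Fin 4) ψ :=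
          h1 (1 : Fin 4) (M16.refl (1 : Fin 4)) (force_mono M16 le01 φ h0.1)
        have f3 : force M16 (3 : Fin 4) ψ :=
          h3 (3 : Fin 4) (M16.refl (3 : Fin 4)) (force_mono M16 le23 φ h2.1)
        rcases ihψ hθ.2 f1 f3 with h | h
        · exact h0.2 h
        · exact h2.2 h

abbrev leF : Fin 4 → Fin 4 → Prop := fun x y => x = y ∨ (x = 0 ∧ y = 1) ∨ (x = 2 ∧ y = 3)

lemma connM16 : Connected M16 :=
  fun k k' k'' =>
    (by decide : ∀ a b c : Fin 4, leF a b → leF a c → leF b c ∨ leF c b) k k' k''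

/-- In the two-chain model M16, every {¬, →, ⊤}-formula θ forced at both b and d
is forced at a or at c; b and d force p ∨ q but neither a nor c does; and
consequently p ∨ q is not equivalent to any {¬, →, ⊤}-formula in Gödel–Dummett
logic (i.e., over all connected finite Kripke models). -/
theorem or_not_definable_from_neg_imp :
    (∀ θ : Fm (Fin 2), OnlyNegImp θ →
        force M16 (1 : Fin 4) θ → force M16 (3 : Fin 4) θ →
        force M16 (0 : Fin 4) θ ∨ force M16 (2 : Fin 4) θ) ∧
    (force M16 (1 : Fin 4) (Fm.or (Fm.atom 0) (Fm.atom 1)) ∧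
     force M16 (3 : Fin 4) (Fm.or (Fm.atom 0) (Fm.atom 1)) ∧
     ¬ force M16 (0 : Fin 4) (Fm.or (Fm.atom 0) (Fm.atom 1)) ∧
     ¬ force M16 (2 : Fin 4) (Fm.or (Fm.atom 0) (Fm.atom 1))) ∧
    ¬ ∃ θ : Fm (Fin 2), OnlyNegImp θ ∧
        ∀ (M : KripkeModel (Fin 2)), Fintype M.K → Connected M →
          ∀ k : M.K, (force M k θ ↔ force M k (Fm.or (Fm.atom 0) (Fm.atom 1))) := by
  refine ⟨main_lemma, ⟨?_, ?_, ?_, ?_⟩, ?_⟩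
  · exact Or.inl (Or.inl ⟨rfl, rfl⟩)
  · exact Or.inr (Or.inr ⟨rfl, rfl⟩)
  · rintro ((⟨h, _⟩ | ⟨h, _⟩) | (⟨h, _⟩ | ⟨h, _⟩)) <;> exact absurd h (by decide)
  · rintro ((⟨h, _⟩ | ⟨h, _⟩) | (⟨h, _⟩ | ⟨h, _⟩)) <;> exact absurd h (by decide)
  · rintro ⟨θ, hθ, hequiv⟩
    have h := hequiv M16 (inferInstanceAs (Fintype (Fin 4))) connM16
    have h1 : force M16 (1 : Fin 4) θ := (h (1 : Fin 4)).mpr (Or.inl (Or.inl ⟨rfl, rfl⟩))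
    have h3 : force M16 (3 : Fin 4) θ := (h (3 : Fin 4)).mpr (Or.inr (Or.inr ⟨rfl, rfl⟩))
    rcases main_lemma θ hθ h1 h3 with h0 | h2
    · rcases (h (0 : Fin 4)).mp h0 with (⟨hx, _⟩ | ⟨hx, _⟩) | (⟨hx, _⟩ | ⟨hx, _⟩) <;>
        exact absurd hx (by decide)
    · rcases (h (2 : Fin 4)).mp h2 with (⟨hx, _⟩ | ⟨hx, _⟩) | (⟨hx, _⟩ | ⟨hx, _⟩) <;>
        exact absurd hx (by decide)
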